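/- arXiv:1607.04242 — 2 statements merged into one kernel-verified Lean document; each statement's English description precedes it below -/
import Mathlib

section
/- Evolution of the characteristic function under the quantum diffusion semigroup (the paper's Theorem 2, item 2, in weak form): for every integer n ≥ 1, every t > 0, every z ∈ ℝ^{2n}, and all φ, ψ ∈ L²(ℝⁿ), one has ∫_{ℝ^{2n}} g_{t/2}(w) ⟨φ, V(−w) V(z) V(w) ψ⟩ dw = e^{−t|z|²/4} ⟨φ, V(z) ψ⟩. -/
open MeasureTheory ComplexConjugate

/-- The Weyl (displacement) operator `V(q,p)` on `L²(ℝⁿ)`, acting on functions: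
`(V(q,p)ψ)(x) = exp(-i q·p/2) exp(-i p·x) ψ(x+q)`. -/
noncomputable def weylOp {n : ℕ} (q p : EuclideanSpace ℝ (Fin n))
    (ψ : EuclideanSpace ℝ (Fin n) → ℂ) : EuclideanSpace ℝ (Fin n) → ℂ :=
  fun x => Complex.exp (-Complex.I * ((inner ℝ q p : ℝ) : ℂ) / 2) *
    Complex.exp (-Complex.I * ((inner ℝ p x : ℝ) : ℂ)) * ψ (x + q)

/-- Weyl commutation: `V(-w) V(z) V(w) = e^{i(⟪w₁,z₂⟫ - ⟪w₂,z₁⟫)} V(z)` pointwise. -/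
lemma weyl_conj {n : ℕ} (w1 w2 z1 z2 : EuclideanSpace ℝ (Fin n))
    (ψ : EuclideanSpace ℝ (Fin n) → ℂ) (x : EuclideanSpace ℝ (Fin n)) :
    weylOp (-w1) (-w2) (weylOp z1 z2 (weylOp w1 w2 ψ)) x
      = Complex.exp (Complex.I * (((inner ℝ w1 z2 : ℝ) : ℂ) - ((inner ℝ w2 z1 : ℝ) : ℂ))) *
        weylOp z1 z2 ψ x := by
  have hpt : x + -w1 + z1 + w1 = x + z1 := by abel
  have fuse : ∀ (a b u : ℂ), Complex.exp a * (Complex.exp b * u) = Complex.exp (a + b) * u :=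
    fun a b u => by rw [← mul_assoc, ← Complex.exp_add]
  simp only [weylOp, hpt, inner_neg_neg, inner_neg_left, inner_add_right, inner_neg_right,
    neg_neg, mul_assoc, fuse]
  congr 1
  rw [real_inner_comm z2 w1, real_inner_comm w2 w1]
  push_cast
  ring

/-- The Gaussian integral of the commutation phase. -/
lemma gauss_int {n : ℕ} (t : ℝ) (ht : 0 < t) (z1 z2 : EuclideanSpace ℝ (Fin n)) :
    (∫ w : EuclideanSpace ℝ (Fin n) × EuclideanSpace ℝ (Fin n),
        ((((Real.pi * t) ^ (-(n : ℝ)) * Real.exp (-(‖w.1‖ ^ 2 + ‖w.2‖ ^ 2) / t) : ℝ)) : ℂ) *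
          Complex.exp (Complex.I * (((inner ℝ w.1 z2 : ℝ) : ℂ) - ((inner ℝ w.2 z1 : ℝ) : ℂ))))
      = ((Real.exp (-(t * (‖z1‖ ^ 2 + ‖z2‖ ^ 2)) / 4) : ℝ) : ℂ) := by
  have hb : (0:ℝ) < ((1/(t:ℂ))).re := by
    simp [Complex.div_re, Complex.normSq]
    positivity
  have h1 := GaussianFourier.integral_cexp_neg_mul_sq_norm_add_of_euclideanSpace (ι := Fin n)
    hb Complex.I z2
  have h2 := GaussianFourier.integral_cexp_neg_mul_sq_norm_add_of_euclideanSpace (ι := Fin n)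
    hb (-Complex.I) z1
  have hsplit : ∀ w : EuclideanSpace ℝ (Fin n) × EuclideanSpace ℝ (Fin n),
      ((((Real.pi * t) ^ (-(n : ℝ)) * Real.exp (-(‖w.1‖ ^ 2 + ‖w.2‖ ^ 2) / t) : ℝ)) : ℂ) *
          Complex.exp (Complex.I * (((inner ℝ w.1 z2 : ℝ) : ℂ) - ((inner ℝ w.2 z1 : ℝ) : ℂ)))
        = (((Real.pi * t) ^ (-(n : ℝ)) : ℝ) : ℂ) *
            Complex.exp (-(1/(t:ℂ)) * (‖w.1‖:ℂ)^2 + Complex.I * ((inner ℝ z2 w.1 : ℝ) : ℂ)) *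
          Complex.exp (-(1/(t:ℂ)) * (‖w.2‖:ℂ)^2 + (-Complex.I) * ((inner ℝ z1 w.2 : ℝ) : ℂ)) := by
    intro w
    rw [real_inner_comm z2 w.1, real_inner_comm z1 w.2]
    rw [Complex.ofReal_mul, Complex.ofReal_exp]
    simp only [mul_assoc, ← Complex.exp_add]
    congr 1
    have htne : (t:ℂ) ≠ 0 := by exact_mod_cast ht.ne'
    push_cast
    field_simp
    ring
  simp_rw [hsplit]
  rw [MeasureTheory.Measure.volume_eq_prod,
    MeasureTheory.integral_prod_mul
      (fun a : EuclideanSpace ℝ (Fin n) => (((Real.pi * t) ^ (-(n : ℝ)) : ℝ) : ℂ) *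
        Complex.exp (-(1/(t:ℂ)) * (‖a‖:ℂ)^2 + Complex.I * ((inner ℝ z2 a : ℝ) : ℂ)))
      (fun b : EuclideanSpace ℝ (Fin n) =>
        Complex.exp (-(1/(t:ℂ)) * (‖b‖:ℂ)^2 + (-Complex.I) * ((inner ℝ z1 b : ℝ) : ℂ)))]
  rw [MeasureTheory.integral_const_mul, h1, h2]
  have hπt : (0:ℝ) < Real.pi * t := by positivity
  simp only [Fintype.card_fin]
  have htne : (t:ℂ) ≠ 0 := by exact_mod_cast ht.ne'
  have hne : ((Real.pi * t : ℝ) : ℂ) ≠ 0 := by exact_mod_cast hπt.ne'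
  have hd : ((Real.pi : ℝ) : ℂ) / (1/(t:ℂ)) = ((Real.pi * t : ℝ) : ℂ) := by
    push_cast; field_simp
  rw [hd]
  rw [show ((((Real.pi * t) ^ (-(n:ℝ)) : ℝ)) : ℂ) = ((Real.pi * t : ℝ):ℂ) ^ (-(n:ℕ) : ℂ) from by
    rw [Complex.ofReal_cpow hπt.le]; norm_num]
  rw [show ∀ (A P E1 E2 : ℂ), A * (P * E1) * (P * E2) = A * (P * P) * (E1 * E2) from
    fun _ _ _ _ => by ring]
  rw [← Complex.cpow_add _ _ hne, ← Complex.cpow_add _ _ hne]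
  rw [show (-(n:ℕ) : ℂ) + ((n:ℂ)/2 + (n:ℂ)/2) = 0 from by push_cast; ring]
  rw [Complex.cpow_zero, one_mul, ← Complex.exp_add, Complex.ofReal_exp]
  congr 1
  simp only [neg_sq, Complex.I_sq]
  push_cast
  field_simp
  ring

/-- Evolution of the characteristic function under the quantum diffusion semigroup, in weak
form: for `t > 0`, `z ∈ ℝ^{2n}` and `φ, ψ ∈ L²(ℝⁿ)`,
`∫ g_{t/2}(w) ⟨φ, V(-w)V(z)V(w)ψ⟩ dw = e^{-t|z|²/4} ⟨φ, V(z)ψ⟩`. -/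
theorem characteristic_function_evolution (n : ℕ) (hn : 1 ≤ n) (t : ℝ) (ht : 0 < t)
    (z : EuclideanSpace ℝ (Fin n) × EuclideanSpace ℝ (Fin n))
    (φ ψ : EuclideanSpace ℝ (Fin n) → ℂ)
    (hφ : MemLp φ 2 (volume : Measure (EuclideanSpace ℝ (Fin n))))
    (hψ : MemLp ψ 2 (volume : Measure (EuclideanSpace ℝ (Fin n)))) :
    (∫ w : EuclideanSpace ℝ (Fin n) × EuclideanSpace ℝ (Fin n),
        ((((Real.pi * t) ^ (-(n : ℝ)) * Real.exp (-(‖w.1‖ ^ 2 + ‖w.2‖ ^ 2) / t) : ℝ)) : ℂ) *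
          ∫ x, conj (φ x) *
            weylOp (-w.1) (-w.2) (weylOp z.1 z.2 (weylOp w.1 w.2 ψ)) x)
      = ((Real.exp (-(t * (‖z.1‖ ^ 2 + ‖z.2‖ ^ 2)) / 4) : ℝ) : ℂ) *
          ∫ x, conj (φ x) * weylOp z.1 z.2 ψ x := by
  have step1 : ∀ w : EuclideanSpace ℝ (Fin n) × EuclideanSpace ℝ (Fin n),
      (∫ x, conj (φ x) * weylOp (-w.1) (-w.2) (weylOp z.1 z.2 (weylOp w.1 w.2 ψ)) x)
        = Complex.exp (Complex.I * (((inner ℝ w.1 z.2 : ℝ) : ℂ) - ((inner ℝ w.2 z.1 : ℝ) : ℂ))) *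
          ∫ x, conj (φ x) * weylOp z.1 z.2 ψ x := by
    intro w
    rw [← MeasureTheory.integral_const_mul]
    congr 1
    funext x
    rw [weyl_conj]
    ring
  simp_rw [step1, ← mul_assoc]
  rw [MeasureTheory.integral_mul_const, gauss_int t ht z.1 z.2]
end

section
/- Isoperimetric and log-Sobolev inequalities from concavity and linear growth (the analytic skeleton of the paper's Theorems 5 and 6): let n ≥ 1 be an integer and let S : [0,∞) → ℝ be differentiable with S'(t) = J(t)/4 for all t ≥ 0, where J : [0,∞) → (0,∞) is differentiable and satisfies J'(t) + J(t)²/(4n) ≤ 0 for all t ≥ 0. Assume moreover that there exists M ≥ 0 such that |exp(S(t)/n) − e·t/2| ≤ M for all t ≥ 0, where e is Euler's number. Then J(0) · exp(S(0)/n) ≥ 2en, and consequently n − S(0) ≤ J(0)/(2e). -/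
open Set

/-- Isoperimetric and log-Sobolev inequalities from concavity and linear growth:
if `S' = J/4` on `[0,∞)` with `J > 0` differentiable satisfying `J' + J²/(4n) ≤ 0`,
and `|exp(S(t)/n) - e·t/2| ≤ M` for all `t ≥ 0`, then `J(0)·exp(S(0)/n) ≥ 2en` and
consequently `n - S(0) ≤ J(0)/(2e)`. -/
theorem isoperimetric_and_log_sobolev (n : ℕ) (hn : 1 ≤ n)
    (S J J' : ℝ → ℝ)
    (hS : ∀ t ∈ Ici (0 : ℝ), HasDerivWithinAt S (J t / 4) (Ici 0) t)
    (hJpos : ∀ t ∈ Ici (0 : ℝ), 0 < J t)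
    (hJ : ∀ t ∈ Ici (0 : ℝ), HasDerivWithinAt J (J' t) (Ici 0) t)
    (hRic : ∀ t ∈ Ici (0 : ℝ), J' t + J t ^ 2 / (4 * n) ≤ 0)
    (M : ℝ) (hM : 0 ≤ M)
    (hlin : ∀ t ∈ Ici (0 : ℝ),
      |Real.exp (S t / n) - Real.exp 1 * t / 2| ≤ M) :
    2 * Real.exp 1 * n ≤ J 0 * Real.exp (S 0 / n) ∧
      (n : ℝ) - S 0 ≤ J 0 / (2 * Real.exp 1) := by
  have hn' : (0 : ℝ) < n := by exact_mod_cast hn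
  set N : ℝ → ℝ := fun t => Real.exp (S t / n) with hNdef
  have hNpos : ∀ t, 0 < N t := fun t => Real.exp_pos _
  have hNd : ∀ t ∈ Ici (0 : ℝ), HasDerivWithinAt N (N t * (J t / 4 / n)) (Ici 0) t := by
    intro t ht
    exact ((hS t ht).div_const n).exp
  set F : ℝ → ℝ := fun t => J t * N t / (4 * n) with hFdef
  have hFd : ∀ t ∈ Ici (0 : ℝ), HasDerivWithinAt F
      ((J' t * N t + J t * (N t * (J t / 4 / n))) / (4 * n)) (Ici 0) t := by
    intro t ht
    exact ((hJ t ht).mul (hNd t ht)).div_const _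
  have hFd_nonpos : ∀ t ∈ Ici (0 : ℝ),
      (J' t * N t + J t * (N t * (J t / 4 / n))) / (4 * n) ≤ 0 := by
    intro t ht
    have h1 := hRic t ht
    have h2 := hNpos t
    have heq : J' t * N t + J t * (N t * (J t / 4 / n))
        = N t * (J' t + J t ^ 2 / (4 * n)) := by
      field_simp
    rw [heq]
    apply div_nonpos_of_nonpos_of_nonneg
    · exact mul_nonpos_iff.mpr (Or.inl ⟨h2.le, h1⟩)
    · positivity
  have hFanti : AntitoneOn F (Ici 0) := by
    apply antitoneOn_of_deriv_nonpos (convex_Ici 0)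
    · exact fun t ht => (hFd t ht).continuousWithinAt
    · intro t ht
      rw [interior_Ici] at ht
      exact (((hFd t (mem_Ici.mpr (mem_Ioi.mp ht).le)).hasDerivAt (Ici_mem_nhds ht)).differentiableAt).differentiableWithinAt
    · intro t ht
      rw [interior_Ici] at ht
      rw [((hFd t (mem_Ici.mpr (mem_Ioi.mp ht).le)).hasDerivAt (Ici_mem_nhds ht)).deriv]
      exact hFd_nonpos t (mem_Ici.mpr (mem_Ioi.mp ht).le)
  -- g t = N 0 + F 0 * t - N t is monotone on Ici 0
  set g : ℝ → ℝ := fun t => N 0 + F 0 * t - N t with hgdef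
  have hgd : ∀ t ∈ Ici (0 : ℝ), HasDerivWithinAt g (F 0 - N t * (J t / 4 / n)) (Ici 0) t := by
    intro t ht
    have h1 : HasDerivWithinAt (fun t : ℝ => N 0 + F 0 * t) (F 0) (Ici 0) t := by
      simpa using ((hasDerivWithinAt_id t (Ici 0)).const_mul (F 0)).const_add (N 0)
    exact h1.sub (hNd t ht)
  have hgmono : MonotoneOn g (Ici 0) := by
    apply monotoneOn_of_deriv_nonneg (convex_Ici 0)
    · exact fun t ht => (hgd t ht).continuousWithinAt
    · intro t ht
      rw [interior_Ici] at ht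
      exact (((hgd t (mem_Ici.mpr (mem_Ioi.mp ht).le)).hasDerivAt (Ici_mem_nhds ht)).differentiableAt).differentiableWithinAt
    · intro t ht
      rw [interior_Ici] at ht
      rw [((hgd t (mem_Ici.mpr (mem_Ioi.mp ht).le)).hasDerivAt (Ici_mem_nhds ht)).deriv]
      have hFt : F t ≤ F 0 := hFanti self_mem_Ici (mem_Ici.mpr (mem_Ioi.mp ht).le) (mem_Ioi.mp ht).le
      have : N t * (J t / 4 / n) = F t := by
        simp only [hFdef]
        field_simp
      rw [this]
      linarith
  have hNle : ∀ t ∈ Ici (0 : ℝ), N t ≤ N 0 + F 0 * t := by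
    intro t ht
    have := hgmono (self_mem_Ici) ht ht
    simp only [hgdef] at this
    simp only [mul_zero, add_zero] at this
    linarith
  -- main step: e/2 ≤ F 0
  have hmain : Real.exp 1 / 2 ≤ F 0 := by
    by_contra h
    push_neg at h
    obtain ⟨c, hc⟩ : ∃ c : ℝ, c = Real.exp 1 / 2 - F 0 := ⟨_, rfl⟩
    have hcpos : 0 < c := by rw [hc]; linarith
    obtain ⟨t, htdef⟩ : ∃ t : ℝ, t = (M + N 0) / c + 1 := ⟨_, rfl⟩
    have htnn : 0 ≤ (M + N 0) / c := div_nonneg (by linarith [hNpos 0]) hcpos.le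
    have htpos : (0 : ℝ) < t := by rw [htdef]; linarith
    have h1 := hlin t htpos.le
    have h2 := hNle t htpos.le
    have h3 : Real.exp 1 * t / 2 - M ≤ N t := by
      have h1' := (abs_le.mp h1).1
      show Real.exp 1 * t / 2 - M ≤ Real.exp (S t / n)
      linarith
    have hct : c * t = Real.exp 1 * t / 2 - F 0 * t := by rw [hc]; ring
    have h4 : c * t ≤ M + N 0 := by linarith
    have h5 : c * t = M + N 0 + c := by
      rw [htdef]
      field_simp
    linarith
  have h1 : 2 * Real.exp 1 * n ≤ J 0 * Real.exp (S 0 / n) := by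
    have hF0 : F 0 = J 0 * N 0 / (4 * n) := rfl
    rw [hF0, le_div_iff₀ (by positivity)] at hmain
    have hN0 : N 0 = Real.exp (S 0 / n) := rfl
    nlinarith [hmain]
  refine ⟨h1, ?_⟩
  have hexp : -(S 0 / n) + 1 ≤ Real.exp (-(S 0 / n)) := Real.add_one_le_exp _
  have hdiv : (n : ℝ) * (S 0 / n) = S 0 := mul_div_cancel₀ _ hn'.ne'
  have hkey : (n : ℝ) * Real.exp (-(S 0 / n)) ≤ J 0 / (2 * Real.exp 1) := by
    rw [le_div_iff₀ (by positivity)]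
    have hcalc : (n : ℝ) * Real.exp (-(S 0 / n)) * (2 * Real.exp 1)
        = (2 * Real.exp 1 * n) * Real.exp (-(S 0 / n)) := by ring
    rw [hcalc]
    calc (2 * Real.exp 1 * n) * Real.exp (-(S 0 / n))
        ≤ (J 0 * Real.exp (S 0 / n)) * Real.exp (-(S 0 / n)) :=
          mul_le_mul_of_nonneg_right h1 (Real.exp_pos _).le
      _ = J 0 := by rw [mul_assoc, ← Real.exp_add]; simp
  have h2 : (n : ℝ) - S 0 ≤ (n : ℝ) * Real.exp (-(S 0 / n)) := by
    have := mul_le_mul_of_nonneg_left hexp hn'.le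
    nlinarith [hdiv]
  linarith
end
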